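/- Suppose f(s) > 0 for all s ∈ (0,1), m_H(s) − m_L(s) > 0 for all s ∈ (0,1), and the escalation benefit m_H − m_L is weakly decreasing on (0,1) (s' > s'' implies m_H(s') − m_L(s') ≤ m_H(s'') − m_L(s'')). Define the Pareto frontier U†(B) = sup{ U(τ) : τ ∈ [0,1], C(τ) ≤ B }. Then U† is a concave function on the budget interval [c_L, c_L + c_H]. -/

import Mathlib

/-- A continuous function nonnegative on an open interval is nonnegative on the
closed interval. -/
lemma aux_nonneg_Icc_of_Ioo {g : ℝ → ℝ} (hg : Continuous g) {a b : ℝ} (hab : a < b)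
    (h : ∀ s ∈ Set.Ioo a b, 0 ≤ g s) : ∀ s ∈ Set.Icc a b, 0 ≤ g s := by
  intro s hs
  have hsub : Set.Icc a b ⊆ {x | 0 ≤ g x} := by
    rw [← closure_Ioo hab.ne]
    exact closure_minimal h (isClosed_le continuous_const hg)
  exact hsub hs

/-- If `f > 0` on `(0,1)`, the escalation benefit `mH - mL`
is positive and weakly decreasing on `(0,1)`, then the Pareto frontier
`U†(B) = sup { U τ : τ ∈ [0,1], C τ ≤ B }` is concave on the budget interval
`[cL, cL + cH]`. -/
theorem two_model_cascade_pareto_frontier_concave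
    (f mL mH : ℝ → ℝ) (hf : Continuous f)
    (hf0 : ∀ s ∈ Set.Icc (0:ℝ) 1, 0 ≤ f s)
    (hfint : (∫ s in (0:ℝ)..1, f s) = 1)
    (hmL : Continuous mL) (hmH : Continuous mH)
    (cL cH : ℝ) (hcL : 0 ≤ cL) (hcH : 0 < cH)
    (C U : ℝ → ℝ)
    (hC : ∀ τ, C τ = cL + cH * ∫ s in (0:ℝ)..τ, f s)
    (hU : ∀ τ, U τ = (∫ s in (0:ℝ)..τ, mH s * f s) + ∫ s in τ..(1:ℝ), mL s * f s)
    (hfpos : ∀ s ∈ Set.Ioo (0:ℝ) 1, 0 < f s)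
    (hdom : ∀ s ∈ Set.Ioo (0:ℝ) 1, 0 < mH s - mL s)
    (hdec : ∀ s' ∈ Set.Ioo (0:ℝ) 1, ∀ s'' ∈ Set.Ioo (0:ℝ) 1, s'' < s' →
      mH s' - mL s' ≤ mH s'' - mL s'')
    (Udag : ℝ → ℝ)
    (hUdag : ∀ B, Udag B = sSup {u : ℝ | ∃ τ ∈ Set.Icc (0:ℝ) 1, C τ ≤ B ∧ u = U τ}) :
    ConcaveOn ℝ (Set.Icc cL (cL + cH)) Udag := by
  -- basic integrability
  have hfi : ∀ a b : ℝ, IntervalIntegrable f MeasureTheory.volume a b :=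
    fun a b => (hf.intervalIntegrable a b)
  have hmHfi : ∀ a b : ℝ, IntervalIntegrable (fun s => mH s * f s) MeasureTheory.volume a b :=
    fun a b => ((hmH.mul hf).intervalIntegrable a b)
  have hmLfi : ∀ a b : ℝ, IntervalIntegrable (fun s => mL s * f s) MeasureTheory.volume a b :=
    fun a b => ((hmL.mul hf).intervalIntegrable a b)
  -- difference formulas
  have hCdiff : ∀ a b : ℝ, C b - C a = cH * ∫ s in a..b, f s := by
    intro a b
    rw [hC, hC, ← intervalIntegral.integral_add_adjacent_intervals (hfi 0 a) (hfi a b)]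
    ring
  have hUdiff : ∀ a b : ℝ, U b - U a = ∫ s in a..b, (mH s - mL s) * f s := by
    intro a b
    have h1 : (∫ s in (0:ℝ)..b, mH s * f s)
        = (∫ s in (0:ℝ)..a, mH s * f s) + ∫ s in a..b, mH s * f s :=
      (intervalIntegral.integral_add_adjacent_intervals (hmHfi 0 a) (hmHfi a b)).symm
    have h2 : (∫ s in a..(1:ℝ), mL s * f s)
        = (∫ s in a..b, mL s * f s) + ∫ s in b..(1:ℝ), mL s * f s :=
      (intervalIntegral.integral_add_adjacent_intervals (hmLfi a b) (hmLfi b 1)).symm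
    have h3 : (∫ s in a..b, (mH s - mL s) * f s)
        = (∫ s in a..b, mH s * f s) - ∫ s in a..b, mL s * f s := by
      rw [← intervalIntegral.integral_sub (hmHfi a b) (hmLfi a b)]
      congr 1; funext s; ring
    rw [hU, hU, h1, h2, h3]; ring
  -- C is strictly monotone on [0,1]
  have hposint : ∀ a ∈ Set.Icc (0:ℝ) 1, ∀ b ∈ Set.Icc (0:ℝ) 1, a < b →
      0 < ∫ s in a..b, f s := by
    intro a ha b hb hab
    refine intervalIntegral.intervalIntegral_pos_of_pos_on (hfi a b) (fun x hx => ?_) hab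
    exact hfpos x ⟨lt_of_le_of_lt ha.1 hx.1, lt_of_lt_of_le hx.2 hb.2⟩
  have hCmono : StrictMonoOn C (Set.Icc (0:ℝ) 1) := by
    intro a ha b hb hab
    have := hposint a ha b hb hab
    have hd := hCdiff a b
    nlinarith
  -- U is monotone on [0,1]
  have hUmono : MonotoneOn U (Set.Icc (0:ℝ) 1) := by
    intro a ha b hb hab
    rcases eq_or_lt_of_le hab with rfl | hab
    · exact le_rfl
    have hnn : ∀ s ∈ Set.Icc a b, 0 ≤ (mH s - mL s) * f s := by
      refine aux_nonneg_Icc_of_Ioo (((hmH.sub hmL).mul hf)) hab (fun s hs => ?_)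
      have hs01 : s ∈ Set.Ioo (0:ℝ) 1 :=
        ⟨lt_of_le_of_lt ha.1 hs.1, lt_of_lt_of_le hs.2 hb.2⟩
      exact mul_nonneg (hdom s hs01).le (hfpos s hs01).le
    have hint : (0:ℝ) ≤ ∫ s in a..b, (mH s - mL s) * f s :=
      intervalIntegral.integral_nonneg hab.le hnn
    have hd := hUdiff a b
    linarith
  -- value of Udag at a point where the budget is exactly attained
  have hUdagEq : ∀ B τB, τB ∈ Set.Icc (0:ℝ) 1 → C τB = B → Udag B = U τB := by
    intro B τB hτB hCB
    rw [hUdag]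
    apply IsGreatest.csSup_eq
    constructor
    · exact ⟨τB, hτB, hCB.le, rfl⟩
    · rintro u ⟨τ, hτ, hCτ, rfl⟩
      have hle : τ ≤ τB := by
        by_contra hlt
        push_neg at hlt
        have := hCmono hτB hτ hlt
        rw [hCB] at this
        exact absurd hCτ (not_le.mpr this)
      exact hUmono hτ hτB hle
  -- existence of exact-budget thresholds via IVT
  have hC0 : C 0 = cL := by rw [hC]; simp
  have hC1 : C 1 = cL + cH := by rw [hC, hfint]; ring
  have hCcont : Continuous C := by
    have : Continuous fun τ => cL + cH * ∫ s in (0:ℝ)..τ, f s :=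
      continuous_const.add (continuous_const.mul
        (intervalIntegral.continuous_primitive hfi 0))
    exact this.congr (fun τ => (hC τ).symm)
  have hexists : ∀ B ∈ Set.Icc cL (cL + cH), ∃ τ ∈ Set.Icc (0:ℝ) 1, C τ = B := by
    intro B hB
    have := intermediate_value_Icc (by norm_num : (0:ℝ) ≤ 1) hCcont.continuousOn
    rw [hC0, hC1] at this
    exact this hB
  -- concavity via slopes
  refine concaveOn_of_slope_anti_adjacent (convex_Icc _ _) ?_
  intro x y z hx hz hxy hyz
  have hy : y ∈ Set.Icc cL (cL + cH) := ⟨hx.1.trans hxy.le, hyz.le.trans hz.2⟩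
  obtain ⟨τ1, hτ1, hCτ1⟩ := hexists x hx
  obtain ⟨τ2, hτ2, hCτ2⟩ := hexists y hy
  obtain ⟨τ3, hτ3, hCτ3⟩ := hexists z hz
  have hτ12 : τ1 < τ2 := by
    rcases lt_trichotomy τ1 τ2 with h | h | h
    · exact h
    · rw [h, hCτ2] at hCτ1; exact absurd hCτ1 hxy.ne'
    · have := hCmono hτ2 hτ1 h; rw [hCτ1, hCτ2] at this; linarith
  have hτ23 : τ2 < τ3 := by
    rcases lt_trichotomy τ2 τ3 with h | h | h
    · exact h
    · rw [h, hCτ3] at hCτ2; exact absurd hCτ2 hyz.ne'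
    · have := hCmono hτ3 hτ2 h; rw [hCτ2, hCτ3] at this; linarith
  have hτ2mem : τ2 ∈ Set.Ioo (0:ℝ) 1 :=
    ⟨lt_of_le_of_lt hτ1.1 hτ12, lt_of_lt_of_le hτ23 hτ3.2⟩
  -- rewrite everything in terms of integrals
  rw [hUdagEq x τ1 hτ1 hCτ1, hUdagEq y τ2 hτ2 hCτ2, hUdagEq z τ3 hτ3 hCτ3]
  set k := mH τ2 - mL τ2 with hk
  have hk0 : 0 < k := hdom τ2 hτ2mem
  set A1 := ∫ s in τ1..τ2, (mH s - mL s) * f s with hA1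
  set A2 := ∫ s in τ2..τ3, (mH s - mL s) * f s with hA2
  set D1 := ∫ s in τ1..τ2, f s with hD1
  set D2 := ∫ s in τ2..τ3, f s with hD2
  have hD1pos : 0 < D1 := hposint τ1 hτ1 τ2 hτ2 hτ12
  have hD2pos : 0 < D2 := hposint τ2 hτ2 τ3 hτ3 hτ23
  have hU21 : U τ2 - U τ1 = A1 := hUdiff τ1 τ2
  have hU32 : U τ3 - U τ2 = A2 := hUdiff τ2 τ3
  have hyx : y - x = cH * D1 := by rw [← hCτ2, ← hCτ1]; exact hCdiff τ1 τ2
  have hzy : z - y = cH * D2 := by rw [← hCτ3, ← hCτ2]; exact hCdiff τ2 τ3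
  -- key inequalities: A1 ≥ k * D1 and A2 ≤ k * D2
  have hA1ge : k * D1 ≤ A1 := by
    have hnn : ∀ s ∈ Set.Icc τ1 τ2, 0 ≤ (mH s - mL s) * f s - k * f s := by
      refine aux_nonneg_Icc_of_Ioo (by fun_prop) hτ12 (fun s hs => ?_)
      have hs01 : s ∈ Set.Ioo (0:ℝ) 1 :=
        ⟨lt_of_le_of_lt hτ1.1 hs.1, hs.2.trans hτ2mem.2⟩
      have hks : k ≤ mH s - mL s := hdec τ2 hτ2mem s hs01 hs.2
      have hfs : 0 ≤ f s := (hfpos s hs01).le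
      nlinarith
    have hint : (0:ℝ) ≤ ∫ s in τ1..τ2, ((mH s - mL s) * f s - k * f s) :=
      intervalIntegral.integral_nonneg hτ12.le hnn
    have hsplit : (∫ s in τ1..τ2, ((mH s - mL s) * f s - k * f s)) = A1 - k * D1 := by
      rw [intervalIntegral.integral_sub (f := fun s => (mH s - mL s) * f s) (g := fun s => k * f s)
        (((hmH.sub hmL).mul hf).intervalIntegrable _ _)
        ((continuous_const.mul hf).intervalIntegrable _ _),
        intervalIntegral.integral_const_mul]
    rw [hsplit] at hint
    linarith
  have hA2le : A2 ≤ k * D2 := by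
    have hnn : ∀ s ∈ Set.Icc τ2 τ3, 0 ≤ k * f s - (mH s - mL s) * f s := by
      refine aux_nonneg_Icc_of_Ioo (by fun_prop) hτ23 (fun s hs => ?_)
      have hs01 : s ∈ Set.Ioo (0:ℝ) 1 :=
        ⟨hτ2mem.1.trans hs.1, lt_of_lt_of_le hs.2 hτ3.2⟩
      have hks : mH s - mL s ≤ k := hdec s hs01 τ2 hτ2mem hs.1
      have hfs : 0 ≤ f s := (hfpos s hs01).le
      nlinarith
    have hint : (0:ℝ) ≤ ∫ s in τ2..τ3, (k * f s - (mH s - mL s) * f s) :=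
      intervalIntegral.integral_nonneg hτ23.le hnn
    have hsplit : (∫ s in τ2..τ3, (k * f s - (mH s - mL s) * f s)) = k * D2 - A2 := by
      rw [intervalIntegral.integral_sub (f := fun s => k * f s) (g := fun s => (mH s - mL s) * f s)
        ((continuous_const.mul hf).intervalIntegrable _ _)
        (((hmH.sub hmL).mul hf).intervalIntegrable _ _),
        intervalIntegral.integral_const_mul]
    rw [hsplit] at hint
    linarith
  -- conclude the slope inequality
  rw [hU32, hU21, hzy, hyx, div_le_div_iff₀ (by positivity) (by positivity)]
  nlinarith [mul_le_mul_of_nonneg_right hA1ge hD2pos.le,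
    mul_le_mul_of_nonneg_right hA2le hD1pos.le, hcH.le, mul_pos hD1pos hD2pos]
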